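/- arXiv:1804.09559 — 3 statements merged into one kernel-verified Lean document; each statement's English description precedes it below -/
import Mathlib

section
/- Let E = ℝⁿ, x ∈ E, g : E → E and hᵢ : E → E (i = 1, …, M) vector fields differentiable at x, ρ ∈ E, ℓ' ∈ E, Ω : E →L[ℝ] E a continuous linear map, and u ∈ ℝᴹ. Define the vector fields F₁ = g and F₂ : y ↦ g(y) + Σᵢ uᵢ hᵢ(y), and the Lie bracket [f₁, f₂](x) = Df₂(x)(f₁(x)) − Df₁(x)(f₂(x)). Then ⟪F₂(x) − F₁(x), Ω(F₂(x) − F₁(x))⟫ + ⟪ρ, DF₂(x)(F₂(x)) + DF₁(x)(F₁(x)) − 2 DF₁(x)(F₂(x))⟫ − ⟪ℓ', F₂(x) − F₁(x)⟫ = Σᵢ Σⱼ uᵢ uⱼ ⟪hᵢ(x), Ω(hⱼ(x))⟫ + ⟪ρ, Σ_{i=2}^{M} Σ_{j=1}^{i−1} uᵢ uⱼ [hᵢ, hⱼ](x) + 2 Σ_{i=2}^{M} Σ_{j=1}^{i−1} uᵢ uⱼ Dhᵢ(x)(hⱼ(x)) + Σᵢ uᵢ² Dhᵢ(x)(hᵢ(x))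 + Σᵢ uᵢ [g, hᵢ](x)⟫ − ⟪ℓ', Σᵢ uᵢ hᵢ(x)⟫. -/
open scoped RealInnerProductSpace

lemma tri_sum {β : Type*} [AddCommMonoid β] {M : ℕ} (b : Fin M → Fin M → β) :
    ∑ i, ∑ j, b i j =
      ((∑ i, ∑ j ∈ Finset.univ.filter (fun j => j < i), b i j)
      + ∑ i, ∑ j ∈ Finset.univ.filter (fun j => j < i), b j i) + ∑ i, b i i := by
  have key : ∀ i j : Fin M, b i j =
      (if j < i then b i j else 0) + (if i < j then b i j else 0) +
        (if i = j then b i j else 0) := by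
    intro i j
    rcases lt_trichotomy i j with hlt | heq | hgt
    · simp [hlt, not_lt.2 hlt.le, hlt.ne]
    · simp [heq]
    · simp [hgt, not_lt.2 hgt.le, hgt.ne']
  calc ∑ i, ∑ j, b i j
      = ∑ i, ∑ j, ((if j < i then b i j else 0) + (if i < j then b i j else 0) +
        (if i = j then b i j else 0)) := by
        refine Finset.sum_congr rfl fun i _ => Finset.sum_congr rfl fun j _ => key i j
    _ = ((∑ i, ∑ j, if j < i then b i j else 0) + ∑ i, ∑ j, if i < j then b i j else 0)
        + ∑ i, ∑ j, if i = j then b i j else 0 := by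
        simp [Finset.sum_add_distrib]
    _ = _ := by
        congr 1
        · congr 1
          · exact Finset.sum_congr rfl fun i _ => (Finset.sum_filter _ _).symm
          · rw [Finset.sum_comm]
            exact Finset.sum_congr rfl fun i _ => (Finset.sum_filter _ _).symm
        · exact Finset.sum_congr rfl fun i _ => by simp

noncomputable def lieBracket {n : ℕ} (f₁ f₂ : EuclideanSpace ℝ (Fin n) → EuclideanSpace ℝ (Fin n))
    (x : EuclideanSpace ℝ (Fin n)) : EuclideanSpace ℝ (Fin n) :=
  fderiv ℝ f₂ x (f₁ x) - fderiv ℝ f₁ x (f₂ x)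

theorem stmt_6 (n M : ℕ) (hn : 0 < n) (hM : 0 < M)
    (x : EuclideanSpace ℝ (Fin n))
    (g : EuclideanSpace ℝ (Fin n) → EuclideanSpace ℝ (Fin n))
    (h : Fin M → EuclideanSpace ℝ (Fin n) → EuclideanSpace ℝ (Fin n))
    (hg : DifferentiableAt ℝ g x)
    (hh : ∀ i, DifferentiableAt ℝ (h i) x)
    (ρ ℓ' : EuclideanSpace ℝ (Fin n))
    (Ω : EuclideanSpace ℝ (Fin n) →L[ℝ] EuclideanSpace ℝ (Fin n))
    (u : Fin M → ℝ)
    (F₁ F₂ : EuclideanSpace ℝ (Fin n) → EuclideanSpace ℝ (Fin n))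
    (hF₁ : F₁ = g)
    (hF₂ : F₂ = fun y => g y + ∑ i : Fin M, u i • h i y) :
    ⟪F₂ x - F₁ x, Ω (F₂ x - F₁ x)⟫ +
      ⟪ρ, fderiv ℝ F₂ x (F₂ x) + fderiv ℝ F₁ x (F₁ x) - (2 : ℝ) • fderiv ℝ F₁ x (F₂ x)⟫ -
      ⟪ℓ', F₂ x - F₁ x⟫ =
    (∑ i : Fin M, ∑ j : Fin M, (u i * u j) * ⟪h i x, Ω (h j x)⟫) +
      ⟪ρ, (∑ i : Fin M, ∑ j ∈ Finset.univ.filter (fun j => j < i),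
            (u i * u j) • lieBracket (h i) (h j) x) +
          (2 : ℝ) • (∑ i : Fin M, ∑ j ∈ Finset.univ.filter (fun j => j < i),
            (u i * u j) • fderiv ℝ (h i) x (h j x)) +
          (∑ i : Fin M, (u i ^ 2) • fderiv ℝ (h i) x (h i x)) +
          ∑ i : Fin M, u i • lieBracket g (h i) x⟫ -
      ⟪ℓ', ∑ i : Fin M, u i • h i x⟫ := by
  rw [hF₁, hF₂]
  set G := fderiv ℝ g x with hG
  set D : Fin M → _ := fun i => fderiv ℝ (h i) x with hD
  set v : Fin M → EuclideanSpace ℝ (Fin n) := fun i => h i x with hv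
  set S : EuclideanSpace ℝ (Fin n) →L[ℝ] EuclideanSpace ℝ (Fin n) := ∑ i, u i • D i with hS
  have hdF : fderiv ℝ (fun y => g y + ∑ i : Fin M, u i • h i y) x = G + S := by
    refine HasFDerivAt.fderiv ?_
    exact hg.hasFDerivAt.add (HasFDerivAt.fun_sum fun i _ => ((hh i).hasFDerivAt).const_smul (u i))
  have hFx : (fun y => g y + ∑ i : Fin M, u i • h i y) x = g x + ∑ i, u i • v i := rfl
  set w : EuclideanSpace ℝ (Fin n) := ∑ i, u i • v i with hw
  rw [hdF, hFx]
  have hsub : g x + w - g x = w := by abel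
  rw [hsub]
  -- compute the adjoint argument of the LHS
  have hρarg : (G + S) (g x + w) + G (g x) - (2 : ℝ) • G (g x + w)
      = S (g x) + S w - G w := by
    simp only [ContinuousLinearMap.add_apply, map_add, two_smul, smul_add]
    abel
  rw [hρarg]
  -- lieBracket values
  have hlb1 : ∀ i j : Fin M, lieBracket (h i) (h j) x = D j (v i) - D i (v j) := fun i j => rfl
  have hlb2 : ∀ i : Fin M, lieBracket g (h i) x = D i (g x) - G (v i) := fun i => rfl
  -- S applied
  have hSw : S w = ∑ i, ∑ j, (u i * u j) • D i (v j) := by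
    rw [hS, hw]
    simp only [ContinuousLinearMap.sum_apply, ContinuousLinearMap.smul_apply, map_sum,
      map_smul, Finset.smul_sum, mul_smul]
    rw [Finset.sum_comm]
    exact Finset.sum_congr rfl fun i _ => Finset.sum_congr rfl fun j _ => smul_comm _ _ _
  have hSg : S (g x) = ∑ i, u i • D i (g x) := by
    simp [hS, ContinuousLinearMap.sum_apply]
  have hGw : G w = ∑ i, u i • G (v i) := by
    simp [hw, Finset.smul_sum]
  -- the RHS adjoint argument equals the LHS one
  have hRarg : (∑ i : Fin M, ∑ j ∈ Finset.univ.filter (fun j => j < i),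
            (u i * u j) • lieBracket (h i) (h j) x) +
          (2 : ℝ) • (∑ i : Fin M, ∑ j ∈ Finset.univ.filter (fun j => j < i),
            (u i * u j) • fderiv ℝ (h i) x (h j x)) +
          (∑ i : Fin M, (u i ^ 2) • fderiv ℝ (h i) x (h i x)) +
          (∑ i : Fin M, u i • lieBracket g (h i) x)
      = S (g x) + S w - G w := by
    simp only [hlb1, hlb2, ← hD, ← hv, hSw, hSg, hGw]
    rw [tri_sum (fun i j => (u i * u j) • D i (v j))]
    simp only [smul_sub, two_smul, Finset.smul_sum, Finset.sum_add_distrib,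
      Finset.sum_sub_distrib, pow_two, mul_smul]
    have hcomm : ∀ i j : Fin M, (u j * u i) • D j (v i) = (u i * u j) • D j (v i) := by
      intro i j; rw [mul_comm]
    simp only [← mul_smul]
    rw [show (∑ i : Fin M, ∑ j ∈ Finset.univ.filter (fun j => j < i), (u j * u i) • D j (v i))
        = ∑ i : Fin M, ∑ j ∈ Finset.univ.filter (fun j => j < i), (u i * u j) • D j (v i) from
      Finset.sum_congr rfl fun i _ => Finset.sum_congr rfl fun j _ => hcomm i j]
    abel
  rw [hRarg]
  -- the Ω quadratic term
  have hΩ : ⟪w, Ω w⟫ = ∑ i : Fin M, ∑ j : Fin M, (u i * u j) * ⟪v i, Ω (v j)⟫ := by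
    rw [hw]
    rw [map_sum, sum_inner]
    refine Finset.sum_congr rfl fun i _ => ?_
    rw [inner_sum]
    refine Finset.sum_congr rfl fun j _ => ?_
    rw [map_smul, real_inner_smul_left, real_inner_smul_right]
    ring
  rw [hΩ]
end

section
/- Let E = ℝⁿ, x ∈ E, hᵢ : E → E (i = 1, …, M) vector fields differentiable at x, ρ ∈ E, Ω : E →L[ℝ] E, and fix k ∈ {1, …, M}. Define the Lie bracket [f₁, f₂](x) = Df₂(x)(f₁(x)) − Df₁(x)(f₂(x)), and define the symmetric M × M matrix 𝒢 by 𝒢_{ik} = 𝒢_{ki} = ½⟪ρ, [hᵢ, h_k](x)⟫ for i ≠ k, 𝒢_{kk} = ⟪h_k(x), Ω(h_k(x))⟫ + ⟪ρ, Dh_k(x)(h_k(x))⟫, and 𝒢_{ij} = 0 for i, j ≠ k. If there exists i ≠ k with ⟪ρ, [hᵢ, h_k](x)⟫ ≠ 0, then for every c ∈ ℝ there exists u ∈ ℝᴹ such that uᵀ 𝒢 u + u_k · c < 0. -/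
open Matrix
open scoped RealInnerProductSpace

theorem stmt_10 (n M : ℕ) (hn : 0 < n) (hM : 0 < M)
    (x : EuclideanSpace ℝ (Fin n))
    (h : Fin M → EuclideanSpace ℝ (Fin n) → EuclideanSpace ℝ (Fin n))
    (hh : ∀ i, DifferentiableAt ℝ (h i) x)
    (ρ : EuclideanSpace ℝ (Fin n))
    (Ω : EuclideanSpace ℝ (Fin n) →L[ℝ] EuclideanSpace ℝ (Fin n))
    (k : Fin M)
    (G : Matrix (Fin M) (Fin M) ℝ) (hGsymm : G.IsSymm)
    (hGik : ∀ i, i ≠ k → G i k = (1 / 2) * ⟪ρ, lieBracket (h i) (h k) x⟫)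
    (hGki : ∀ i, i ≠ k → G k i = (1 / 2) * ⟪ρ, lieBracket (h i) (h k) x⟫)
    (hGkk : G k k = ⟪h k x, Ω (h k x)⟫ + ⟪ρ, fderiv ℝ (h k) x (h k x)⟫)
    (hGzero : ∀ i j, i ≠ k → j ≠ k → G i j = 0)
    (hbracket : ∃ i, i ≠ k ∧ ⟪ρ, lieBracket (h i) (h k) x⟫ ≠ 0) :
    ∀ c : ℝ, ∃ u : Fin M → ℝ, u ⬝ᵥ G.mulVec u + u k * c < 0 := by
  intro c
  obtain ⟨i, hik, hb⟩ := hbracket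
  set b := ⟪ρ, lieBracket (h i) (h k) x⟫ with hbdef
  set a := G k k with hadef
  set s : ℝ := (-a - c - 1) / b with hsdef
  refine ⟨Pi.single i s + Pi.single k 1, ?_⟩
  have huk : (Pi.single i s + Pi.single k 1 : Fin M → ℝ) k = 1 := by
    simp [Pi.single_eq_of_ne (Ne.symm hik)]
  have hGii : G i i = 0 := hGzero i i hik hik
  have hdot : (Pi.single i s + Pi.single k 1 : Fin M → ℝ) ⬝ᵥ
      G.mulVec (Pi.single i s + Pi.single k 1) = s * b + a := by
    simp only [Matrix.mulVec_add, dotProduct_add, add_dotProduct,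
      Matrix.mulVec_single, single_dotProduct, Pi.add_apply, Pi.smul_apply,
      Matrix.col_apply, op_smul_eq_mul]
    rw [hGii, hGik i hik, hGki i hik]
    rw [← hbdef, ← hadef]
    ring
  rw [hdot, huk, hsdef]
  field_simp
  nlinarith [sq_nonneg b, mul_self_pos.2 hb]
end

section
/- Let E = ℝⁿ, x ∈ E, hᵢ : E → E (i = 1, …, M) vector fields differentiable at x, k ∈ {1, …, M}, and let u, v ∈ ℝᴹ satisfy v_k = 0 and uⱼ = vⱼ for all j ≠ k. Define the Lie bracket [f₁, f₂](x) = Df₂(x)(f₁(x)) − Df₁(x)(f₂(x)). Then the following identity holds in ℝⁿ: (Σⱼ uⱼ Dhⱼ(x))(Σⱼ uⱼ hⱼ(x)) + (Σᵢ vᵢ Dhᵢ(x))(Σᵢ vᵢ hᵢ(x)) − 2(Σᵢ vᵢ Dhᵢ(x))(Σⱼ uⱼ hⱼ(x)) = u_k · Σ_{j ≠ k} uⱼ [hⱼ, h_k](x) + u_k² · Dh_k(x)(h_k(x)), where each Dhᵢ(x) denotes the Fréchet derivative of hᵢ at x applied as a linear map. -/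
theorem stmt_18 (n M : ℕ) (hn : 0 < n) (hM : 0 < M)
    (x : EuclideanSpace ℝ (Fin n))
    (h : Fin M → EuclideanSpace ℝ (Fin n) → EuclideanSpace ℝ (Fin n))
    (hh : ∀ i, DifferentiableAt ℝ (h i) x)
    (k : Fin M) (u v : Fin M → ℝ)
    (hvk : v k = 0) (huv : ∀ j, j ≠ k → u j = v j) :
    (∑ j : Fin M, u j • fderiv ℝ (h j) x) (∑ j : Fin M, u j • h j x) +
      (∑ i : Fin M, v i • fderiv ℝ (h i) x) (∑ i : Fin M, v i • h i x) -
      (2 : ℝ) • (∑ i : Fin M, v i • fderiv ℝ (h i) x) (∑ j : Fin M, u j • h j x) =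
    u k • (∑ j ∈ Finset.univ.erase k, u j • lieBracket (h j) (h k) x) +
      (u k ^ 2) • fderiv ℝ (h k) x (h k x) := by
  classical
  set D := fderiv ℝ (h k) x with hDdef
  set B := ∑ i : Fin M, v i • fderiv ℝ (h i) x with hBdef
  set b := ∑ i : Fin M, v i • h i x with hbdef
  set c := u k with hcdef
  have hA : (∑ j : Fin M, u j • fderiv ℝ (h j) x) = B + c • D := by
    rw [hBdef, ← Finset.sum_erase_add _ _ (Finset.mem_univ k),
      ← Finset.sum_erase_add _ _ (Finset.mem_univ k), hvk]
    rw [zero_smul ℝ (fderiv ℝ (h k) x), add_zero]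
    congr 1
    exact Finset.sum_congr rfl fun j hj => by
      rw [huv j (Finset.ne_of_mem_erase hj)]
  have ha : (∑ j : Fin M, u j • h j x) = b + c • h k x := by
    rw [hbdef, ← Finset.sum_erase_add _ _ (Finset.mem_univ k),
      ← Finset.sum_erase_add _ _ (Finset.mem_univ k), hvk]
    simp only [zero_smul, add_zero]
    congr 1
    exact Finset.sum_congr rfl fun j hj => by
      rw [huv j (Finset.ne_of_mem_erase hj)]
  have hbr : (∑ j ∈ Finset.univ.erase k, u j • lieBracket (h j) (h k) x)
      = D b - B (h k x) := by
    have h1 : D b = ∑ i : Fin M, v i • D (h i x) := by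
      rw [hbdef, map_sum]
      exact Finset.sum_congr rfl fun i _ => by rw [map_smul]
    have h2 : B (h k x) = ∑ i : Fin M, v i • fderiv ℝ (h i) x (h k x) := by
      rw [hBdef, ContinuousLinearMap.sum_apply]
      exact Finset.sum_congr rfl fun i _ => rfl
    rw [h1, h2, ← Finset.sum_sub_distrib]
    rw [← Finset.sum_erase_add _ _ (Finset.mem_univ k), hvk]
    simp only [zero_smul, sub_zero, add_zero]
    exact Finset.sum_congr rfl fun j hj => by
      rw [huv j (Finset.ne_of_mem_erase hj), lieBracket, smul_sub]
  rw [hA, ha, hbr]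
  simp only [ContinuousLinearMap.add_apply, ContinuousLinearMap.smul_apply,
    map_add, map_smul, pow_two, ← smul_smul]
  module
end
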